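/- Let S^n(1/k) be the sphere of radius 1/k in ℝ^{n+1}, n ≥ 2, and let v ∈ ℝ^{n+1} be a nonzero vector. The vector field X on S^n(1/k) given by the pointwise orthogonal projection of v onto the tangent spaces of S^n(1/k), X(p) = v − k²⟨v,p⟩p, satisfies −div∇X = k² X; that is, X is an eigenvector field of the rough Laplacian with eigenvalue k². -/

import Mathlib

open MeasureTheory Metric
open scoped RealInnerProductSpace

noncomputable section

/-- The sphere of radius `1/k` centered at the origin of `ℝ^{n+1}`. -/
def Sph (n : ℕ) (k : ℝ) : Set (EuclideanSpace ℝ (Fin (n + 1))) :=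
  sphere (0 : EuclideanSpace ℝ (Fin (n + 1))) (1 / k)

/-- Orthogonal projection onto the tangent space of `S^n(1/k)` at `p` (for `p` on the
sphere, i.e. `‖p‖ = 1/k`): `u ↦ u − k²⟨u,p⟩p`. -/
def tproj (n : ℕ) (k : ℝ) (p u : EuclideanSpace ℝ (Fin (n + 1))) :
    EuclideanSpace ℝ (Fin (n + 1)) :=
  u - (k ^ 2 * ⟪u, p⟫) • p

/-- Covariant derivative (Levi–Civita connection of `S^n(1/k)`) of the vector field `X`
at `p` in the (tangential part of the) direction `u`: the tangential projection of the
ambient directional derivative. -/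
def covD (n : ℕ) (k : ℝ) (X : EuclideanSpace ℝ (Fin (n + 1)) → EuclideanSpace ℝ (Fin (n + 1)))
    (p u : EuclideanSpace ℝ (Fin (n + 1))) : EuclideanSpace ℝ (Fin (n + 1)) :=
  tproj n k p (fderiv ℝ X p (tproj n k p u))

/-- Pointwise squared norm `‖∇X‖²` of the covariant derivative of `X` at `p` (the
Hilbert–Schmidt norm; summing over the standard orthonormal basis of the ambient space
is the same as summing over an orthonormal basis of the tangent space, since the
normal direction is projected away). -/
def covNormSq (n : ℕ) (k : ℝ)
    (X : EuclideanSpace ℝ (Fin (n + 1)) → EuclideanSpace ℝ (Fin (n + 1)))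
    (p : EuclideanSpace ℝ (Fin (n + 1))) : ℝ :=
  ∑ i : Fin (n + 1), ‖covD n k X p (EuclideanSpace.single i 1)‖ ^ 2

/-- The Riemannian volume measure of `S^n(1/k)`: the `n`-dimensional Hausdorff measure
restricted to the sphere. -/
def smeasure (n : ℕ) (k : ℝ) : Measure (EuclideanSpace ℝ (Fin (n + 1))) :=
  (μH[(n : ℝ)]).restrict (Sph n k)

/-- The energy functional `F(X) = (∫ ‖∇X‖²)/(∫ ‖X‖²)` on vector fields of `S^n(1/k)`. -/
def energy (n : ℕ) (k : ℝ)
    (X : EuclideanSpace ℝ (Fin (n + 1)) → EuclideanSpace ℝ (Fin (n + 1))) : ℝ :=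
  (∫ p, covNormSq n k X p ∂smeasure n k) / (∫ p, ‖X p‖ ^ 2 ∂smeasure n k)

/-- A vector field (given by an ambient extension) is tangent to `S^n(1/k)`. -/
def IsTangent (n : ℕ) (k : ℝ)
    (X : EuclideanSpace ℝ (Fin (n + 1)) → EuclideanSpace ℝ (Fin (n + 1))) : Prop :=
  ∀ p ∈ Sph n k, ⟪X p, p⟫ = 0

/-- `X` is a Killing field of `S^n(1/k)`: its Killing tensor
`Kill(X)(u,v) = (⟨∇ᵤX, v⟩ + ⟨∇ᵥX, u⟩)/2` vanishes identically (equivalently, its flow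
consists of isometries). -/
def IsKillingField (n : ℕ) (k : ℝ)
    (X : EuclideanSpace ℝ (Fin (n + 1)) → EuclideanSpace ℝ (Fin (n + 1))) : Prop :=
  ∀ p ∈ Sph n k, ∀ u v : EuclideanSpace ℝ (Fin (n + 1)),
    ⟪u, p⟫ = 0 → ⟪v, p⟫ = 0 → ⟪covD n k X p u, v⟫ + ⟪covD n k X p v, u⟫ = 0

end

noncomputable section

/-- The rough Laplacian `div∇X` of a vector field `X` of `S^n(1/k)` at `p`: the trace of
the second covariant derivative, computed as `Σᵢ ∇_{Ẽᵢ}(∇_{Ẽᵢ}X)(p)` where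
`Ẽᵢ(q) = tproj q eᵢ` are the tangential projections of the standard basis fields (at a
point `p` of the sphere this sum equals the trace of `∇²X` over an orthonormal basis of
the tangent space, since `Σᵢ ∇_{Ẽᵢ}Ẽᵢ(p) = 0`). -/
def roughLapS (n : ℕ) (k : ℝ)
    (X : EuclideanSpace ℝ (Fin (n + 1)) → EuclideanSpace ℝ (Fin (n + 1)))
    (p : EuclideanSpace ℝ (Fin (n + 1))) : EuclideanSpace ℝ (Fin (n + 1)) :=
  ∑ i : Fin (n + 1),
    tproj n k p
      (fderiv ℝ (fun q => covD n k X q (EuclideanSpace.single i 1)) p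
        (tproj n k p (EuclideanSpace.single i 1)))

end

open scoped RealInnerProductSpace
noncomputable section

lemma hasFDerivAt_X (n : ℕ) (k : ℝ) (v q : EuclideanSpace ℝ (Fin (n+1))) :
    HasFDerivAt (fun x => v - (k^2 * ⟪v, x⟫) • x)
      ((0 : EuclideanSpace ℝ (Fin (n+1)) →L[ℝ] EuclideanSpace ℝ (Fin (n+1))) -
        ((k^2 * ⟪v, q⟫) • ContinuousLinearMap.id ℝ _ + (k^2 • innerSL ℝ v).smulRight q)) q :=
  (hasFDerivAt_const v q).sub
    (((innerSL ℝ v).hasFDerivAt.const_mul (k^2)).smul (hasFDerivAt_id q))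

lemma covD_single (n : ℕ) (k : ℝ) (v : EuclideanSpace ℝ (Fin (n+1))) (i : Fin (n+1))
    (q : EuclideanSpace ℝ (Fin (n+1))) :
    covD n k (fun x => v - (k^2 * ⟪v, x⟫) • x) q (EuclideanSpace.single i 1) =
      (-(k^2 * ⟪v, q⟫)) • EuclideanSpace.single i 1 +
      ((-(k^2 * ⟪v, EuclideanSpace.single i 1⟫)
          + 2*(k^2)^2*⟪v, q⟫*⟪EuclideanSpace.single i 1, q⟫) * (1 - k^2*⟪q, q⟫)
        + (k^2)^2*⟪v, q⟫*⟪EuclideanSpace.single i 1, q⟫) • q := by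
  unfold covD
  rw [(hasFDerivAt_X n k v q).fderiv]
  unfold tproj
  simp only [ContinuousLinearMap.sub_apply, ContinuousLinearMap.zero_apply,
    ContinuousLinearMap.add_apply, ContinuousLinearMap.smul_apply,
    ContinuousLinearMap.id_apply, ContinuousLinearMap.smulRight_apply,
    ContinuousLinearMap.neg_apply, Pi.add_apply, Pi.smul_apply, Pi.neg_apply, id_eq,
    ContinuousLinearMap.coe_smul, ContinuousLinearMap.coe_add, ContinuousLinearMap.coe_id,
    innerSL_apply_apply, smul_eq_mul, map_sub, _root_.map_smul, starRingEnd_apply, star_trivial,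
    inner_sub_left, inner_sub_right, inner_add_left, inner_neg_left,
    real_inner_smul_left, real_inner_smul_right, zero_sub]
  match_scalars <;> ring

lemma term_single (n : ℕ) (k : ℝ) (hk : k ≠ 0) (v p : EuclideanSpace ℝ (Fin (n+1)))
    (hp : ⟪p, p⟫ = 1/k^2) (i : Fin (n+1)) :
    tproj n k p (fderiv ℝ (fun q => covD n k (fun x => v - (k^2 * ⟪v, x⟫) • x) q
        (EuclideanSpace.single i 1)) p (tproj n k p (EuclideanSpace.single i 1))) =
      (-(k^2 * ⟪v, EuclideanSpace.single i 1⟫)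
          + 2*(k^2)^2*⟪v, p⟫*⟪EuclideanSpace.single i 1, p⟫) • EuclideanSpace.single i 1 +
      ((k^2)^2*⟪v, EuclideanSpace.single i 1⟫*⟪EuclideanSpace.single i 1, p⟫
          - 2*(k^2)^3*⟪v, p⟫*⟪EuclideanSpace.single i 1, p⟫^2) • p := by
  set e : EuclideanSpace ℝ (Fin (n+1)) := EuclideanSpace.single i 1 with he
  have ha : HasFDerivAt (fun q : EuclideanSpace ℝ (Fin (n+1)) => ⟪v, q⟫) (innerSL ℝ v) p :=
    (innerSL ℝ v).hasFDerivAt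
  have hb : HasFDerivAt (fun q : EuclideanSpace ℝ (Fin (n+1)) => ⟪e, q⟫) (innerSL ℝ e) p :=
    (innerSL ℝ e).hasFDerivAt
  have hs : HasFDerivAt (fun q : EuclideanSpace ℝ (Fin (n+1)) => ⟪q, q⟫)
      ((fderivInnerCLM ℝ (p, p)).comp ((ContinuousLinearMap.id ℝ _).prod
        (ContinuousLinearMap.id ℝ _))) p :=
    (hasFDerivAt_id p).inner ℝ (hasFDerivAt_id p)
  have hG := (((((ha.const_mul (2*(k^2)^2)).mul hb).const_add (-(k^2 * ⟪v, e⟫))).mul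
      ((hs.const_mul (k^2)).const_sub 1)).add ((ha.const_mul ((k^2)^2)).mul hb))
  have hY : HasFDerivAt (fun q : EuclideanSpace ℝ (Fin (n+1)) =>
      (-(k^2 * ⟪v, q⟫)) • e +
      ((-(k^2 * ⟪v, e⟫) + 2*(k^2)^2*⟪v, q⟫*⟪e, q⟫) * (1 - k^2*⟪q, q⟫)
        + (k^2)^2*⟪v, q⟫*⟪e, q⟫) • q) _ p :=
    ((ha.const_mul (k^2)).neg.smul_const e).add (hG.smul (hasFDerivAt_id p))
  rw [show (fun q => covD n k (fun x => v - (k^2 * ⟪v, x⟫) • x) q e) =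
      (fun q : EuclideanSpace ℝ (Fin (n+1)) =>
      (-(k^2 * ⟪v, q⟫)) • e +
      ((-(k^2 * ⟪v, e⟫) + 2*(k^2)^2*⟪v, q⟫*⟪e, q⟫) * (1 - k^2*⟪q, q⟫)
        + (k^2)^2*⟪v, q⟫*⟪e, q⟫) • q) from funext (fun q => by rw [he]; exact covD_single n k v i q),
    hY.fderiv]
  unfold tproj
  simp only [ContinuousLinearMap.add_apply, ContinuousLinearMap.smul_apply,
    ContinuousLinearMap.neg_apply, ContinuousLinearMap.smulRight_apply,
    ContinuousLinearMap.id_apply, ContinuousLinearMap.coe_comp', Function.comp_apply,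
    ContinuousLinearMap.prod_apply, fderivInnerCLM_apply, ContinuousLinearMap.coe_smul,
    Pi.smul_apply, Pi.add_apply, Pi.neg_apply, id_eq, ContinuousLinearMap.coe_add, Pi.mul_apply,
    ContinuousLinearMap.coe_id, innerSL_apply_apply, smul_eq_mul, starRingEnd_apply, star_trivial,
    inner_sub_left, inner_sub_right, inner_add_left, inner_add_right, inner_neg_left,
    inner_neg_right, real_inner_smul_left, real_inner_smul_right]
  rw [hp, real_inner_comm p e]
  match_scalars <;> field_simp <;> ring
end

lemma sum_coord_smul_single (n : ℕ) (w : EuclideanSpace ℝ (Fin (n+1))) :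
    ∑ i, (w i) • EuclideanSpace.single i (1:ℝ) = w := by
  simpa [EuclideanSpace.basisFun_apply, EuclideanSpace.basisFun_repr] using
    (EuclideanSpace.basisFun (Fin (n+1)) ℝ).sum_repr w

/-- For a nonzero vector `v ∈ ℝ^{n+1}`, the vector field
`X(p) = v − k²⟨v,p⟩p` on `S^n(1/k)` — the pointwise orthogonal projection of `v` onto
the tangent spaces — satisfies `−div∇X = k²X`, i.e. it is an eigenvector field of the
rough Laplacian with eigenvalue `k²`. -/
theorem projection_field_is_eigenfield
    (n : ℕ) (hn : 2 ≤ n) (k : ℝ) (hk : 0 < k)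
    (v : EuclideanSpace ℝ (Fin (n + 1))) (hv : v ≠ 0) :
    ∀ p ∈ Sph n k,
      -(roughLapS n k (fun q => v - (k ^ 2 * ⟪v, q⟫) • q) p) =
        k ^ 2 • (v - (k ^ 2 * ⟪v, p⟫) • p) := by
  intro p hp
  have hk0 : k ≠ 0 := ne_of_gt hk
  have hpn : ⟪p, p⟫ = 1/k^2 := by
    have hnp : ‖p‖ = 1/k := by simpa [Sph] using hp
    rw [real_inner_self_eq_norm_sq, hnp, div_pow, one_pow]
  unfold roughLapS
  rw [Finset.sum_congr rfl (fun i _ => term_single n k hk0 v p hpn i)]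
  have key : ∀ i : Fin (n+1),
      (-(k^2 * ⟪v, EuclideanSpace.single i 1⟫)
          + 2*(k^2)^2*⟪v, p⟫*⟪EuclideanSpace.single i 1, p⟫) • EuclideanSpace.single i (1:ℝ) +
      ((k^2)^2*⟪v, EuclideanSpace.single i 1⟫*⟪EuclideanSpace.single i 1, p⟫
          - 2*(k^2)^3*⟪v, p⟫*⟪EuclideanSpace.single i 1, p⟫^2) • p =
      (-(k^2)) • ((v i) • EuclideanSpace.single i (1:ℝ))
        + (2*(k^2)^2*⟪v, p⟫) • ((p i) • EuclideanSpace.single i (1:ℝ))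
        + ((k^2)^2*(v i * p i) - 2*(k^2)^3*⟪v, p⟫*(p i * p i)) • p := by
    intro i
    simp only [EuclideanSpace.inner_single_left, EuclideanSpace.inner_single_right,
      starRingEnd_apply, star_trivial, one_mul, mul_one]
    match_scalars <;> ring
  rw [Finset.sum_congr rfl (fun i _ => key i)]
  rw [Finset.sum_add_distrib, Finset.sum_add_distrib, ← Finset.smul_sum, ← Finset.smul_sum,
    sum_coord_smul_single, sum_coord_smul_single, ← Finset.sum_smul]
  have h2 : ∑ i, ((k^2)^2*(v i * p i) - 2*(k^2)^3*⟪v, p⟫*(p i * p i)) =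
      (k^2)^2*⟪v, p⟫ - 2*(k^2)^3*⟪v, p⟫*⟪p, p⟫ := by
    rw [Finset.sum_sub_distrib, ← Finset.mul_sum, ← Finset.mul_sum]
    simp only [PiLp.inner_apply, RCLike.inner_apply, conj_trivial, mul_comm]
  rw [h2, hpn]
  match_scalars <;> field_simp <;> ring
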